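/- Under the list-experiment model with misreporting (Assumptions 1 and 2), if the misreporting probabilities in the two groups are equal, p₀ = p₁ = p, then the mean difference of observed responses satisfies E(Y₁) − E(Y₀) = δ + p·(1−2δ)/2, where E(Y₀) = ∑_{j=0}^{J} j·P₀(j) and E(Y₁) = ∑_{j=0}^{J+1} j·P₁(j). (Corollary 1, equal misreporting probabilities.) -/

import Mathlib

lemma sum_Icc_top_int (f : ℤ → ℝ) (n : ℤ) (hn : 0 ≤ n) :
    ∑ j ∈ Finset.Icc (0 : ℤ) (n + 1), f j
      = (∑ j ∈ Finset.Icc (0 : ℤ) n, f j) + f (n + 1) := by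
  rw [show Finset.Icc (0 : ℤ) (n + 1) = insert (n + 1) (Finset.Icc (0 : ℤ) n) by
      ext x; simp only [Finset.mem_insert, Finset.mem_Icc]; omega,
    Finset.sum_insert (by simp only [Finset.mem_Icc]; omega)]
  ring

lemma gauss_sum_int (n : ℕ) :
    ∑ j ∈ Finset.Icc (0 : ℤ) (n : ℤ), (j : ℝ) = n * (n + 1) / 2 := by
  induction n with
  | zero => simp
  | succ k ih =>
    rw [show ((k + 1 : ℕ) : ℤ) = (k : ℤ) + 1 by push_cast; ring,
      sum_Icc_top_int _ _ (by positivity), ih]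
    push_cast
    ring

/-- Corollary 1 (equal misreporting probabilities): if `p₀ = p₁ = p` then
`E(Y₁) − E(Y₀) = δ + p·(1−2δ)/2`. -/
theorem list_experiment_mean_difference_equal_misreporting
    (J : ℕ) (hJ : 1 ≤ J)
    (P : ℤ → ℝ)
    (hPzero : ∀ j : ℤ, j < 0 ∨ (J : ℤ) < j → P j = 0)
    (hPnonneg : ∀ j : ℤ, 0 ≤ P j)
    (hPsum : ∑ j ∈ Finset.Icc (0 : ℤ) (J : ℤ), P j = 1)
    (δ p : ℝ)
    (hδ : 0 ≤ δ ∧ δ ≤ 1) (hp : 0 ≤ p ∧ p < 1)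
    (P₀ P₁ : ℤ → ℝ)
    (hP₀ : ∀ j : ℤ, 0 ≤ j → j ≤ (J : ℤ) →
      P₀ j = (1 - p) * P j + p / ((J : ℝ) + 1))
    (hP₁ : ∀ j : ℤ, 0 ≤ j → j ≤ (J : ℤ) + 1 →
      P₁ j = (1 - p) * (δ * P (j - 1) + (1 - δ) * P j) + p / ((J : ℝ) + 2)) :
    (∑ j ∈ Finset.Icc (0 : ℤ) ((J : ℤ) + 1), (j : ℝ) * P₁ j) -
        (∑ j ∈ Finset.Icc (0 : ℤ) (J : ℤ), (j : ℝ) * P₀ j) =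
      δ + p * (1 - 2 * δ) / 2 := by
  set S : ℝ := ∑ j ∈ Finset.Icc (0 : ℤ) (J : ℤ), (j : ℝ) * P j with hS
  -- shift sum
  have hshift : ∑ j ∈ Finset.Icc (0 : ℤ) ((J : ℤ) + 1), (j : ℝ) * P (j - 1)
      = S + 1 := by
    have h1 : Finset.Icc (0 : ℤ) ((J : ℤ) + 1)
        = Finset.map ⟨fun x => x + 1, add_left_injective 1⟩ (Finset.Icc (-1 : ℤ) (J : ℤ)) := by
      ext x
      simp only [Finset.mem_map, Finset.mem_Icc, Function.Embedding.coeFn_mk]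
      constructor
      · rintro ⟨h0, h1⟩; exact ⟨x - 1, ⟨by omega, by omega⟩, by omega⟩
      · rintro ⟨y, hy, rfl⟩; omega
    rw [h1, Finset.sum_map]
    simp only [Function.Embedding.coeFn_mk, add_sub_cancel_right]
    have h2 : Finset.Icc (-1 : ℤ) (J : ℤ) = insert (-1) (Finset.Icc (0 : ℤ) (J : ℤ)) := by
      ext x; simp [Finset.mem_Icc]; omega
    rw [h2, Finset.sum_insert (by simp)]
    have : ∀ j ∈ Finset.Icc (0 : ℤ) (J : ℤ),
        ((j + 1 : ℤ) : ℝ) * P j = (j : ℝ) * P j + P j := by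
      intro j _; push_cast; ring
    rw [Finset.sum_congr rfl this, Finset.sum_add_distrib, hPsum]
    norm_num
    exact hS.symm
  have hBext : ∑ j ∈ Finset.Icc (0 : ℤ) ((J : ℤ) + 1), (j : ℝ) * P j = S := by
    rw [sum_Icc_top_int _ _ (by positivity), hPzero ((J : ℤ) + 1) (by right; omega)]
    simp
    exact hS.symm
  have hG1 : ∑ j ∈ Finset.Icc (0 : ℤ) ((J : ℤ) + 1), (j : ℝ)
      = ((J : ℝ) + 1) * ((J : ℝ) + 2) / 2 := by
    have h := gauss_sum_int (J + 1)
    rw [show ((J + 1 : ℕ) : ℤ) = (J : ℤ) + 1 by push_cast; ring] at h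
    rw [h]; push_cast; ring
  have hG0 : ∑ j ∈ Finset.Icc (0 : ℤ) (J : ℤ), (j : ℝ) = (J : ℝ) * ((J : ℝ) + 1) / 2 :=
    gauss_sum_int J
  have hE1 : ∑ j ∈ Finset.Icc (0 : ℤ) ((J : ℤ) + 1), (j : ℝ) * P₁ j
      = (1 - p) * δ * (S + 1) + (1 - p) * (1 - δ) * S
        + p / ((J : ℝ) + 2) * (((J : ℝ) + 1) * ((J : ℝ) + 2) / 2) := by
    have : ∀ j ∈ Finset.Icc (0 : ℤ) ((J : ℤ) + 1), (j : ℝ) * P₁ j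
        = (1 - p) * δ * ((j : ℝ) * P (j - 1)) + (1 - p) * (1 - δ) * ((j : ℝ) * P j)
          + p / ((J : ℝ) + 2) * (j : ℝ) := by
      intro j hj
      rw [Finset.mem_Icc] at hj
      rw [hP₁ j hj.1 hj.2]
      ring
    rw [Finset.sum_congr rfl this, Finset.sum_add_distrib, Finset.sum_add_distrib,
      ← Finset.mul_sum, ← Finset.mul_sum, ← Finset.mul_sum, hshift, hBext, hG1]
  have hE0 : ∑ j ∈ Finset.Icc (0 : ℤ) (J : ℤ), (j : ℝ) * P₀ j
      = (1 - p) * S + p / ((J : ℝ) + 1) * ((J : ℝ) * ((J : ℝ) + 1) / 2) := by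
    have : ∀ j ∈ Finset.Icc (0 : ℤ) (J : ℤ), (j : ℝ) * P₀ j
        = (1 - p) * ((j : ℝ) * P j) + p / ((J : ℝ) + 1) * (j : ℝ) := by
      intro j hj
      rw [Finset.mem_Icc] at hj
      rw [hP₀ j hj.1 hj.2]
      ring
    rw [Finset.sum_congr rfl this, Finset.sum_add_distrib,
      ← Finset.mul_sum, ← Finset.mul_sum, hG0]
  rw [hE1, hE0]
  have h1 : (J : ℝ) + 1 ≠ 0 := by positivity
  have h2 : (J : ℝ) + 2 ≠ 0 := by positivity
  field_simp
  ring
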